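/- Fix 0 < t ≤ 1 and let v₁ = 0, v₂ = s·e^{iπ/3}, v₃ = s·e^{-iπ/3} with s > 0 chosen so that ρ(v₁,v₂) = ρ(v₁,v₃) = t. Given ε > 0 there exists ξ > 0 such that whenever w₁, w₂, w₃ in the unit disk satisfy ρ(v_i, w_i) < tξ for i = 1,2,3, the hyperbolic angle φ = ∠w₂w₁w₃ of the hyperbolic triangle with vertices w₁,w₂,w₃ satisfies |2π/3 − φ| < ε. -/

import Mathlib

open Complex

/-- The hyperbolic metric on the unit disk:
ρ(z,w) = log((1+|(z−w)/(1−conj(w)z)|)/(1−|(z−w)/(1−conj(w)z)|)). -/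
noncomputable def hypDist (z w : ℂ) : ℝ :=
  Real.log ((1 + ‖(z - w) / (1 - (starRingEnd ℂ) w * z)‖) /
    (1 - ‖(z - w) / (1 - (starRingEnd ℂ) w * z)‖))

lemma normSq_identity (z w : ℂ) :
    Complex.normSq (1 - (starRingEnd ℂ) w * z) - Complex.normSq (z - w)
      = (1 - Complex.normSq z) * (1 - Complex.normSq w) := by
  simp [Complex.normSq_apply, Complex.mul_re, Complex.mul_im, Complex.sub_re, Complex.sub_im,
    Complex.one_re, Complex.one_im]
  ring

lemma mobius_lt {z w : ℂ} (hz : ‖z‖ < 1) (hw : ‖w‖ < 1) :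
    ‖z - w‖ < ‖1 - (starRingEnd ℂ) w * z‖ := by
  have hz2 : Complex.normSq z < 1 := by
    rw [← Complex.sq_norm]; nlinarith [norm_nonneg z]
  have hw2 : Complex.normSq w < 1 := by
    rw [← Complex.sq_norm]; nlinarith [norm_nonneg w]
  have h1 : Complex.normSq (z - w) < Complex.normSq (1 - (starRingEnd ℂ) w * z) := by
    nlinarith [normSq_identity z w]
  have := Real.sqrt_lt_sqrt (Complex.normSq_nonneg _) h1
  simpa [Complex.norm_def] using this

lemma denom_pos {z w : ℂ} (hz : ‖z‖ < 1) (hw : ‖w‖ < 1) :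
    0 < ‖1 - (starRingEnd ℂ) w * z‖ :=
  lt_of_le_of_lt (norm_nonneg _) (mobius_lt hz hw)

lemma dlt {z w : ℂ} (hz : ‖z‖ < 1) (hw : ‖w‖ < 1) :
    ‖(z - w) / (1 - (starRingEnd ℂ) w * z)‖ < 1 := by
  rw [norm_div, div_lt_one (denom_pos hz hw)]
  exact mobius_lt hz hw

lemma hypDist_nonneg {z w : ℂ} (hz : ‖z‖ < 1) (hw : ‖w‖ < 1) :
    0 ≤ hypDist z w := by
  have h1 := dlt hz hw
  have h0 := norm_nonneg ((z - w) / (1 - (starRingEnd ℂ) w * z))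
  exact Real.log_nonneg (by rw [le_div_iff₀ (by linarith)]; linarith)

lemma abs_sub_lt_of_hypDist {z w : ℂ} (hz : ‖z‖ < 1) (hw : ‖w‖ < 1)
    {δ : ℝ} (h : hypDist z w < δ) : ‖z - w‖ < Real.exp δ - 1 := by
  set d := ‖(z - w) / (1 - (starRingEnd ℂ) w * z)‖ with hd
  have hd0 : 0 ≤ d := norm_nonneg _
  have hd1 : d < 1 := dlt hz hw
  have hδ : 0 < δ := lt_of_le_of_lt (hypDist_nonneg hz hw) h
  have he : 1 < Real.exp δ := by
    rw [show (1:ℝ) = Real.exp 0 by simp]; exact Real.exp_lt_exp.mpr hδ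
  have hpos : 0 < (1 + d) / (1 - d) := div_pos (by linarith) (by linarith)
  have h2 : (1 + d) / (1 - d) < Real.exp δ := (Real.log_lt_iff_lt_exp hpos).mp h
  have h3 : 1 + d < Real.exp δ * (1 - d) := by
    rwa [div_lt_iff₀ (by linarith)] at h2
  have h4 : d < (Real.exp δ - 1) / 2 := by nlinarith
  have hD : ‖1 - (starRingEnd ℂ) w * z‖ < 2 := by
    calc ‖1 - (starRingEnd ℂ) w * z‖
        ≤ ‖(1:ℂ)‖ + ‖(starRingEnd ℂ) w * z‖ := by
          simpa [sub_eq_add_neg] using norm_add_le 1 (-((starRingEnd ℂ) w * z))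
      _ < 2 := by
          simp only [norm_one, norm_mul, Complex.norm_conj]
          nlinarith [norm_nonneg w, norm_nonneg z]
  have heq : ‖z - w‖ = d * ‖1 - (starRingEnd ℂ) w * z‖ := by
    rw [hd, norm_div, div_mul_cancel₀]
    exact (denom_pos hz hw).ne'
  rw [heq]
  calc d * ‖1 - (starRingEnd ℂ) w * z‖
      < (Real.exp δ - 1) / 2 * 2 := by
        exact mul_lt_mul'' h4 hD hd0 (norm_nonneg _)
    _ = Real.exp δ - 1 := by ring

lemma cosh_log_form {d : ℝ} (h0 : 0 ≤ d) (h1 : d < 1) :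
    Real.cosh (Real.log ((1 + d) / (1 - d))) = (1 + d ^ 2) / (1 - d ^ 2) := by
  have hp : 0 < (1 + d) / (1 - d) := div_pos (by linarith) (by linarith)
  rw [Real.cosh_eq, Real.exp_neg, Real.exp_log hp]
  have h2 : 1 - d ≠ 0 := by linarith
  have h3 : 1 + d ≠ 0 := by linarith
  have h4 : 1 - d ^ 2 ≠ 0 := by nlinarith
  field_simp
  ring

lemma sinh_log_form {d : ℝ} (h0 : 0 ≤ d) (h1 : d < 1) :
    Real.sinh (Real.log ((1 + d) / (1 - d))) = 2 * d / (1 - d ^ 2) := by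
  have hp : 0 < (1 + d) / (1 - d) := div_pos (by linarith) (by linarith)
  rw [Real.sinh_eq, Real.exp_neg, Real.exp_log hp]
  have h2 : 1 - d ≠ 0 := by linarith
  have h3 : 1 + d ≠ 0 := by linarith
  have h4 : 1 - d ^ 2 ≠ 0 := by nlinarith
  field_simp
  ring

lemma hypDist_zero_left (w : ℂ) :
    hypDist 0 w = Real.log ((1 + ‖w‖) / (1 - ‖w‖)) := by
  unfold hypDist
  have : (0 - w) / (1 - (starRingEnd ℂ) w * 0) = -w := by
    rw [mul_zero, sub_zero, zero_sub, div_one]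
  rw [this, norm_neg]

lemma denom_ne_zero {z w : ℂ} (hz : ‖z‖ < 1) (hw : ‖w‖ < 1) :
    (1 : ℂ) - (starRingEnd ℂ) w * z ≠ 0 := by
  intro h
  have := denom_pos hz hw
  rw [h] at this
  simp at this

lemma hypDist_continuousAt {z w : ℂ} (hz : ‖z‖ < 1) (hw : ‖w‖ < 1) :
    ContinuousAt (fun p : ℂ × ℂ => hypDist p.1 p.2) (z, w) := by
  have hf : ContinuousAt
      (fun p : ℂ × ℂ => ‖(p.1 - p.2) / (1 - (starRingEnd ℂ) p.2 * p.1)‖) (z, w) := by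
    apply continuous_norm.continuousAt.comp
    apply ContinuousAt.div
    · fun_prop
    · exact continuousAt_const.sub ((Complex.continuous_conj.comp continuous_snd).mul
        continuous_fst).continuousAt
    · exact denom_ne_zero hz hw
  unfold hypDist
  apply ContinuousAt.log
  · exact (continuousAt_const.add hf).div (continuousAt_const.sub hf)
      (by have := dlt hz hw; simp only; linarith)
  · have h1 := dlt hz hw
    have h0 := norm_nonneg ((z - w) / (1 - (starRingEnd ℂ) w * z))
    have : 0 < (1 + ‖(z - w) / (1 - (starRingEnd ℂ) w * z)‖) /
        (1 - ‖(z - w) / (1 - (starRingEnd ℂ) w * z)‖) :=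
      div_pos (by linarith) (by linarith)
    exact this.ne'


/-- The angle at the vertex w₁ of the hyperbolic triangle w₁w₂w₃, via the hyperbolic law
of cosines. -/
noncomputable def hypAngle (w₁ w₂ w₃ : ℂ) : ℝ :=
  Real.arccos ((Real.cosh (hypDist w₁ w₂) * Real.cosh (hypDist w₁ w₃) -
      Real.cosh (hypDist w₂ w₃)) /
    (Real.sinh (hypDist w₁ w₂) * Real.sinh (hypDist w₁ w₃)))

lemma hypAngle_coord {s : ℝ} (hs0 : 0 < s) (hs1 : s < 1) :
    hypAngle 0 (((s/2 : ℝ) : ℂ) + ((s * Real.sqrt 3 / 2 : ℝ) : ℂ) * I)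
      (((s/2 : ℝ) : ℂ) - ((s * Real.sqrt 3 / 2 : ℝ) : ℂ) * I) = 2 * Real.pi / 3 := by
  have h3 : Real.sqrt 3 * Real.sqrt 3 = 3 := Real.mul_self_sqrt (by norm_num)
  set q : ℝ := s * Real.sqrt 3 / 2 with hqdef
  have hq : q ^ 2 = 3 * s ^ 2 / 4 := by rw [hqdef]; linear_combination (s^2/4) * h3
  set v₂ : ℂ := ((s/2 : ℝ) : ℂ) + (q : ℂ) * I with hv2
  set v₃ : ℂ := ((s/2 : ℝ) : ℂ) - (q : ℂ) * I with hv3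
  have hn2 : Complex.normSq v₂ = s ^ 2 := by
    rw [hv2, Complex.normSq_add_mul_I]; linear_combination hq
  have hn3 : Complex.normSq v₃ = s ^ 2 := by
    have : v₃ = ((s/2 : ℝ) : ℂ) + ((-q : ℝ) : ℂ) * I := by
      rw [hv3, Complex.ofReal_neg]; ring
    rw [this, Complex.normSq_add_mul_I]; linear_combination hq
  have habs2 : ‖v₂‖ = s := by
    rw [Complex.norm_def, hn2, Real.sqrt_sq hs0.le]
  have habs3 : ‖v₃‖ = s := by
    rw [Complex.norm_def, hn3, Real.sqrt_sq hs0.le]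
  have hs2 : (1:ℝ) - s ^ 2 ≠ 0 := by nlinarith
  -- distances from 0
  have hd12 : hypDist 0 v₂ = Real.log ((1 + s) / (1 - s)) := by
    rw [hypDist_zero_left, habs2]
  have hd13 : hypDist 0 v₃ = Real.log ((1 + s) / (1 - s)) := by
    rw [hypDist_zero_left, habs3]
  have hcosh12 : Real.cosh (hypDist 0 v₂) = (1 + s ^ 2) / (1 - s ^ 2) := by
    rw [hd12]; exact cosh_log_form hs0.le hs1
  have hcosh13 : Real.cosh (hypDist 0 v₃) = (1 + s ^ 2) / (1 - s ^ 2) := by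
    rw [hd13]; exact cosh_log_form hs0.le hs1
  have hsinh12 : Real.sinh (hypDist 0 v₂) = 2 * s / (1 - s ^ 2) := by
    rw [hd12]; exact sinh_log_form hs0.le hs1
  have hsinh13 : Real.sinh (hypDist 0 v₃) = 2 * s / (1 - s ^ 2) := by
    rw [hd13]; exact sinh_log_form hs0.le hs1
  -- distance between v₂ and v₃
  set d : ℝ := ‖(v₂ - v₃) / (1 - (starRingEnd ℂ) v₃ * v₂)‖ with hddef
  have hd0 : 0 ≤ d := norm_nonneg _
  have hd1 : d < 1 := dlt (habs2 ▸ hs1) (habs3 ▸ hs1)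
  have hK : (0:ℝ) < 1 + s ^ 2 + s ^ 4 := by positivity
  have hdsq : d ^ 2 = 3 * s ^ 2 / (1 + s ^ 2 + s ^ 4) := by
    rw [hddef, Complex.sq_norm, Complex.normSq_div]
    have e1 : Complex.normSq (v₂ - v₃) = 3 * s ^ 2 := by
      have h : v₂ - v₃ = ((0 : ℝ) : ℂ) + ((2 * q : ℝ) : ℂ) * I := by
        rw [hv2, hv3]; push_cast; ring
      rw [h, Complex.normSq_add_mul_I]; linear_combination 4 * hq
    have e2 : Complex.normSq (1 - (starRingEnd ℂ) v₃ * v₂) = 1 + s ^ 2 + s ^ 4 := by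
      have hconj : (starRingEnd ℂ) v₃ = v₂ := by
        rw [hv2, hv3]
        simp [map_sub, map_mul, map_div₀, map_ofNat, Complex.conj_ofReal, Complex.conj_I]
      have h : (1:ℂ) - (starRingEnd ℂ) v₃ * v₂
          = ((1 - ((s/2) ^ 2 - q ^ 2) : ℝ) : ℂ) + ((-(2 * (s/2) * q) : ℝ) : ℂ) * I := by
        rw [hconj, hv2]
        apply Complex.ext <;>
          simp [Complex.mul_re, Complex.mul_im, Complex.add_re, Complex.add_im,
            Complex.sub_re, Complex.sub_im, Complex.ofReal_re, Complex.ofReal_im,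
            Complex.one_re, Complex.one_im, Complex.I_re, Complex.I_im,
            ← Complex.ofReal_pow] <;> ring
      rw [h, Complex.normSq_add_mul_I]
      linear_combination (q ^ 2 + 3 * s ^ 2 / 4 + 2 + s ^ 2 / 2) * hq
    rw [e1, e2]
  have hcosh23 : Real.cosh (hypDist v₂ v₃)
      = (1 + 3 * s ^ 2 / (1 + s ^ 2 + s ^ 4)) / (1 - 3 * s ^ 2 / (1 + s ^ 2 + s ^ 4)) := by
    unfold hypDist
    rw [← hddef, cosh_log_form hd0 hd1, hdsq]
  -- the cosine of the angle
  unfold hypAngle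
  rw [hcosh12, hcosh13, hcosh23, hsinh12, hsinh13]
  have harg : ((1 + s ^ 2) / (1 - s ^ 2) * ((1 + s ^ 2) / (1 - s ^ 2)) -
      (1 + 3 * s ^ 2 / (1 + s ^ 2 + s ^ 4)) / (1 - 3 * s ^ 2 / (1 + s ^ 2 + s ^ 4))) /
      (2 * s / (1 - s ^ 2) * (2 * s / (1 - s ^ 2))) = -(1/2) := by
    have hdenom : 1 - 3 * s ^ 2 / (1 + s ^ 2 + s ^ 4) = (1 - s ^ 2) ^ 2 / (1 + s ^ 2 + s ^ 4) := by
      field_simp; ring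
    rw [hdenom]
    field_simp
    ring
  rw [harg]
  have hcos : -(1/2 : ℝ) = Real.cos (2 * Real.pi / 3) := by
    have h : 2 * Real.pi / 3 = Real.pi - Real.pi / 3 := by ring
    rw [h, Real.cos_pi_sub, Real.cos_pi_div_three]
  rw [hcos, Real.arccos_cos (by positivity) (by linarith [Real.pi_pos])]

lemma exp_form_pos (s : ℝ) :
    (s : ℂ) * Complex.exp ((Real.pi : ℂ) / 3 * I)
      = ((s/2 : ℝ) : ℂ) + ((s * Real.sqrt 3 / 2 : ℝ) : ℂ) * I := by
  have h : ((Real.pi : ℂ) / 3 * I) = ((Real.pi / 3 : ℝ) : ℂ) * I := by push_cast; ring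
  rw [h, Complex.exp_mul_I, ← Complex.ofReal_cos, ← Complex.ofReal_sin,
    Real.cos_pi_div_three, Real.sin_pi_div_three]
  push_cast; ring

lemma exp_form_neg (s : ℝ) :
    (s : ℂ) * Complex.exp (-((Real.pi : ℂ) / 3) * I)
      = ((s/2 : ℝ) : ℂ) - ((s * Real.sqrt 3 / 2 : ℝ) : ℂ) * I := by
  have h : (-((Real.pi : ℂ) / 3) * I) = ((-(Real.pi / 3) : ℝ) : ℂ) * I := by push_cast; ring
  rw [h, Complex.exp_mul_I, ← Complex.ofReal_cos, ← Complex.ofReal_sin,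
    Real.cos_neg, Real.sin_neg, Real.cos_pi_div_three, Real.sin_pi_div_three]
  push_cast; ring

lemma tanh_mem {x : ℝ} (hx : 0 < x) : 0 < Real.tanh x ∧ Real.tanh x < 1 := by
  have hsc := Real.cosh_sub_sinh x
  have hep := Real.exp_pos (-x)
  have hcp := Real.cosh_pos x
  have hsp : 0 < Real.sinh x := Real.sinh_pos_iff.mpr hx
  rw [Real.tanh_eq_sinh_div_cosh]
  constructor
  · exact div_pos hsp hcp
  · rw [div_lt_one hcp]; linarith


/-- Fix 0 < t ≤ 1 and the triangle with vertices v₁ = 0,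
v₂ = tanh(t/2)·e^{iπ/3}, v₃ = tanh(t/2)·e^{−iπ/3}, so that ρ(v₁,v₂) = ρ(v₁,v₃) = t.
For every ε > 0 there is ξ > 0 so that whenever w₁, w₂, w₃ in the disk satisfy
ρ(vᵢ,wᵢ) < tξ, the angle φ = ∠w₂w₁w₃ satisfies |2π/3 − φ| < ε. -/
theorem angle_stability (t : ℝ) (ht0 : 0 < t) (ht1 : t ≤ 1) (ε : ℝ) (hε : 0 < ε) :
    ∃ ξ : ℝ, 0 < ξ ∧
      ∀ w₁ w₂ w₃ : ℂ, w₁ ∈ Metric.ball (0 : ℂ) 1 → w₂ ∈ Metric.ball (0 : ℂ) 1 →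
        w₃ ∈ Metric.ball (0 : ℂ) 1 →
        hypDist 0 w₁ < t * ξ →
        hypDist ((Real.tanh (t / 2) : ℂ) * Complex.exp (Real.pi / 3 * Complex.I)) w₂ < t * ξ →
        hypDist ((Real.tanh (t / 2) : ℂ) * Complex.exp (-(Real.pi / 3) * Complex.I)) w₃ < t * ξ →
        |2 * Real.pi / 3 - hypAngle w₁ w₂ w₃| < ε := by
  set s : ℝ := Real.tanh (t / 2) with hsdef
  obtain ⟨hs0, hs1⟩ := tanh_mem (x := t / 2) (by linarith)
  set v₂ : ℂ := (s : ℂ) * Complex.exp (Real.pi / 3 * Complex.I) with hv2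
  set v₃ : ℂ := (s : ℂ) * Complex.exp (-(Real.pi / 3) * Complex.I) with hv3
  have hv2c : v₂ = ((s/2 : ℝ) : ℂ) + ((s * Real.sqrt 3 / 2 : ℝ) : ℂ) * I := by
    rw [hv2]; exact exp_form_pos s
  have hv3c : v₃ = ((s/2 : ℝ) : ℂ) - ((s * Real.sqrt 3 / 2 : ℝ) : ℂ) * I := by
    rw [hv3]; exact exp_form_neg s
  have h3 : Real.sqrt 3 * Real.sqrt 3 = 3 := Real.mul_self_sqrt (by norm_num)
  have habs2 : ‖v₂‖ = s := by
    rw [hv2c, Complex.norm_def, Complex.normSq_add_mul_I]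
    have : (s/2) ^ 2 + (s * Real.sqrt 3 / 2) ^ 2 = s ^ 2 := by
      linear_combination (s ^ 2 / 4) * h3
    rw [this, Real.sqrt_sq hs0.le]
  have habs3 : ‖v₃‖ = s := by
    have h : v₃ = ((s/2 : ℝ) : ℂ) + ((-(s * Real.sqrt 3 / 2) : ℝ) : ℂ) * I := by
      rw [hv3c, Complex.ofReal_neg]; ring
    rw [h, Complex.norm_def, Complex.normSq_add_mul_I]
    have : (s/2) ^ 2 + (-(s * Real.sqrt 3 / 2)) ^ 2 = s ^ 2 := by
      linear_combination (s ^ 2 / 4) * h3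
    rw [this, Real.sqrt_sq hs0.le]
  have habs1 : ‖(0 : ℂ)‖ < 1 := by simp
  have hb2 : ‖v₂‖ < 1 := by rw [habs2]; exact hs1
  have hb3 : ‖v₃‖ < 1 := by rw [habs3]; exact hs1
  -- continuity of the angle at the center
  have c12 : ContinuousAt (fun p : ℂ × ℂ × ℂ => hypDist p.1 p.2.1) (0, v₂, v₃) := by
    have := ContinuousAt.comp (f := fun p : ℂ × ℂ × ℂ => (p.1, p.2.1))
      (x := ((0 : ℂ), v₂, v₃)) (hypDist_continuousAt habs1 hb2) (by fun_prop)
    exact this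
  have c13 : ContinuousAt (fun p : ℂ × ℂ × ℂ => hypDist p.1 p.2.2) (0, v₂, v₃) := by
    have := ContinuousAt.comp (f := fun p : ℂ × ℂ × ℂ => (p.1, p.2.2))
      (x := ((0 : ℂ), v₂, v₃)) (hypDist_continuousAt habs1 hb3) (by fun_prop)
    exact this
  have c23 : ContinuousAt (fun p : ℂ × ℂ × ℂ => hypDist p.2.1 p.2.2) (0, v₂, v₃) := by
    have := ContinuousAt.comp (f := fun p : ℂ × ℂ × ℂ => (p.2.1, p.2.2))
      (x := ((0 : ℂ), v₂, v₃)) (hypDist_continuousAt hb2 hb3) (by fun_prop)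
    exact this
  have hs2 : (0:ℝ) < 1 - s ^ 2 := by nlinarith
  have hsinh2 : Real.sinh (hypDist 0 v₂) = 2 * s / (1 - s ^ 2) := by
    rw [hypDist_zero_left, habs2]; exact sinh_log_form hs0.le hs1
  have hsinh3 : Real.sinh (hypDist 0 v₃) = 2 * s / (1 - s ^ 2) := by
    rw [hypDist_zero_left, habs3]; exact sinh_log_form hs0.le hs1
  have hne : Real.sinh (hypDist 0 v₂) * Real.sinh (hypDist 0 v₃) ≠ 0 := by
    rw [hsinh2, hsinh3]
    positivity
  have hGc : ContinuousAt (fun p : ℂ × ℂ × ℂ => hypAngle p.1 p.2.1 p.2.2) (0, v₂, v₃) := by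
    unfold hypAngle
    exact Real.continuous_arccos.continuousAt.comp
      (ContinuousAt.div
        (((Real.continuous_cosh.continuousAt.comp c12).mul
          (Real.continuous_cosh.continuousAt.comp c13)).sub
          (Real.continuous_cosh.continuousAt.comp c23))
        ((Real.continuous_sinh.continuousAt.comp c12).mul
          (Real.continuous_sinh.continuousAt.comp c13)) hne)
  have hval : hypAngle 0 v₂ v₃ = 2 * Real.pi / 3 := by
    rw [hv2c, hv3c]; exact hypAngle_coord hs0 hs1
  obtain ⟨δ, hδ0, hδ⟩ := Metric.continuousAt_iff.mp hGc ε hε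
  refine ⟨Real.log (1 + δ / 2), Real.log_pos (by linarith), ?_⟩
  set ξ : ℝ := Real.log (1 + δ / 2) with hξdef
  have hξ0 : 0 < ξ := Real.log_pos (by linarith)
  intro w₁ w₂ w₃ hw1 hw2 hw3 h1 h2 h3
  have hwa1 : ‖w₁‖ < 1 := by simpa [Complex.dist_eq] using hw1
  have hwa2 : ‖w₂‖ < 1 := by simpa [Complex.dist_eq] using hw2
  have hwa3 : ‖w₃‖ < 1 := by simpa [Complex.dist_eq] using hw3
  have htξ : t * ξ ≤ ξ := by nlinarith
  have hexp : Real.exp ξ - 1 = δ / 2 := by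
    rw [hξdef, Real.exp_log (by linarith)]; ring
  have key : ∀ z w : ℂ, ‖z‖ < 1 → ‖w‖ < 1 → hypDist z w < t * ξ →
      dist w z < δ / 2 := by
    intro z w hz hw h
    have := abs_sub_lt_of_hypDist hz hw (lt_of_lt_of_le h htξ)
    rw [hexp] at this
    rw [dist_comm, Complex.dist_eq]
    exact this
  have d1 := key 0 w₁ habs1 hwa1 h1
  have d2 := key v₂ w₂ hb2 hwa2 h2
  have d3 := key v₃ w₃ hb3 hwa3 h3
  have hdist : dist ((w₁, w₂, w₃) : ℂ × ℂ × ℂ) (0, v₂, v₃) < δ := by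
    rw [Prod.dist_eq, Prod.dist_eq]
    exact max_lt (by linarith) (max_lt (by linarith) (by linarith))
  have := hδ hdist
  rw [hval, Real.dist_eq] at this
  rw [abs_sub_comm] at this
  exact this
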